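/- Under the hypotheses of the previous statement, the function h(x) = u(x) + c(x) − x satisfies h(x) ≥ h(σ_p) > 0 on [σ_ℓ, σ_p]; consequently (u(x)−x)² − c(x)² < 0 on the whole interval, i.e., the denominator of the ODE system never vanishes there. -/

import Mathlib

open Set

theorem key_deriv (γ s₁ σ_ℓ σ_p : ℝ) (ρ u c : ℝ → ℝ)
    (hγ : 1 < γ) (hσℓ : 0 < σ_ℓ)
    (hc : ∀ x ∈ Icc σ_ℓ σ_p, 0 ≤ c x ∧ c x ^ 2 = γ * s₁ * ρ x ^ (γ - 1))
    (hρ' : ∀ x ∈ Icc σ_ℓ σ_p, HasDerivAt ρ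
      (-(2 * u x * (u x - x) * ρ x) / (x * ((u x - x) ^ 2 - c x ^ 2))) x)
    (hu' : ∀ x ∈ Icc σ_ℓ σ_p, HasDerivAt u
      (2 * c x ^ 2 * u x / (x * ((u x - x) ^ 2 - c x ^ 2))) x)
    (hbounds : ∀ x ∈ Icc σ_ℓ σ_p, 0 ≤ u x ∧ u x ≤ x ∧ 0 ≤ ρ x)
    (x : ℝ) (hx : x ∈ Ioo σ_ℓ σ_p) (hP : (u x - x) ^ 2 - c x ^ 2 < 0) :
    ∃ d ≤ 0, HasDerivAt (fun y => u y + c y - y) d x := by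
  have hxI : x ∈ Icc σ_ℓ σ_p := Ioo_subset_Icc_self hx
  obtain ⟨hc0, hc2⟩ := hc x hxI
  obtain ⟨hu0, hux, hρ0⟩ := hbounds x hxI
  have hx0 : 0 < x := lt_trans hσℓ hx.1
  have hD : x * ((u x - x) ^ 2 - c x ^ 2) < 0 := mul_neg_of_pos_of_neg hx0 hP
  have hDne : x * ((u x - x) ^ 2 - c x ^ 2) ≠ 0 := ne_of_lt hD
  have hc2pos : 0 < c x ^ 2 := by nlinarith [sq_nonneg (u x - x)]
  have hcpos : 0 < c x := lt_of_le_of_ne hc0 (by intro h; rw [← h] at hc2pos; simp at hc2pos)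
  have hWpos : 0 < γ * s₁ * ρ x ^ (γ - 1) := hc2 ▸ hc2pos
  have hρne : ρ x ≠ 0 := by
    intro h
    rw [h, Real.zero_rpow (by linarith : γ - 1 ≠ 0)] at hWpos
    simp at hWpos
  have hρpos : 0 < ρ x := lt_of_le_of_ne hρ0 (Ne.symm hρne)
  set ρ'v := -(2 * u x * (u x - x) * ρ x) / (x * ((u x - x) ^ 2 - c x ^ 2)) with hρ'v
  set u'v := 2 * c x ^ 2 * u x / (x * ((u x - x) ^ 2 - c x ^ 2)) with hu'v
  have hρd : HasDerivAt ρ ρ'v x := hρ' x hxI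
  have hud : HasDerivAt u u'v x := hu' x hxI
  have hWd : HasDerivAt (fun y => γ * s₁ * ρ y ^ (γ - 1))
      (γ * s₁ * (ρ'v * (γ - 1) * ρ x ^ (γ - 1 - 1))) x :=
    (hρd.rpow_const (Or.inl hρne)).const_mul (γ * s₁)
  have hWxne : γ * s₁ * ρ x ^ (γ - 1) ≠ 0 := ne_of_gt hWpos
  have hsq : HasDerivAt (fun y => Real.sqrt (γ * s₁ * ρ y ^ (γ - 1)))
      (γ * s₁ * (ρ'v * (γ - 1) * ρ x ^ (γ - 1 - 1)) /
        (2 * Real.sqrt (γ * s₁ * ρ x ^ (γ - 1)))) x := hWd.sqrt hWxne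
  have heq : c =ᶠ[nhds x] (fun y => Real.sqrt (γ * s₁ * ρ y ^ (γ - 1))) := by
    filter_upwards [Icc_mem_nhds hx.1 hx.2] with y hy
    obtain ⟨h1, h2⟩ := hc y hy
    rw [← h2, Real.sqrt_sq h1]
  have hcd : HasDerivAt c
      (γ * s₁ * (ρ'v * (γ - 1) * ρ x ^ (γ - 1 - 1)) /
        (2 * Real.sqrt (γ * s₁ * ρ x ^ (γ - 1)))) x :=
    hsq.congr_of_eventuallyEq heq
  set E := γ * s₁ * (ρ'v * (γ - 1) * ρ x ^ (γ - 1 - 1)) /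
        (2 * Real.sqrt (γ * s₁ * ρ x ^ (γ - 1))) with hE
  refine ⟨u'v + E - 1, ?_, ?_⟩
  · have hsqrt : Real.sqrt (γ * s₁ * ρ x ^ (γ - 1)) = c x := by
      rw [← hc2, Real.sqrt_sq hc0]
    have hrr : ρ x ^ (γ - 1 - 1) * ρ x = ρ x ^ (γ - 1) := by
      rw [← Real.rpow_add_one hρne]; ring_nf
    have hsum : u'v + E = u x * c x * (2 * c x - (γ - 1) * (u x - x)) /
        (x * ((u x - x) ^ 2 - c x ^ 2)) := by
      rw [hE, hsqrt, hu'v, hρ'v]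
      rw [div_add_div _ _ hDne (by positivity), div_eq_div_iff (by positivity) hDne]
      have h2 : γ * s₁ * (ρ x ^ (γ - 1 - 1) * ρ x) = c x ^ 2 := by rw [hrr, hc2]
      have hPne : (u x - x) ^ 2 - c x ^ 2 ≠ 0 := ne_of_lt hP
      field_simp
      linear_combination (-(u x) * (u x - x) * (γ - 1)) * h2
    have hnum : 0 ≤ u x * c x * (2 * c x - (γ - 1) * (u x - x)) := by
      apply mul_nonneg (mul_nonneg hu0 hc0)
      nlinarith
    have := div_nonpos_of_nonneg_of_nonpos hnum hD.le
    linarith [hsum ▸ this]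
  · exact (hud.add hcd).sub (hasDerivAt_id x)

open Set in
theorem stmt_13 (γ s₁ σ_ℓ σ_p : ℝ) (ρ u c : ℝ → ℝ)
    (hγ : 1 < γ) (hs₁ : 0 < s₁) (hσℓ : 0 < σ_ℓ) (hσ : σ_ℓ < σ_p)
    (hc : ∀ x ∈ Icc σ_ℓ σ_p, 0 ≤ c x ∧ c x ^ 2 = γ * s₁ * ρ x ^ (γ - 1))
    (hρ' : ∀ x ∈ Icc σ_ℓ σ_p, HasDerivAt ρ
      (-(2 * u x * (u x - x) * ρ x) / (x * ((u x - x) ^ 2 - c x ^ 2))) x)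
    (hu' : ∀ x ∈ Icc σ_ℓ σ_p, HasDerivAt u
      (2 * c x ^ 2 * u x / (x * ((u x - x) ^ 2 - c x ^ 2))) x)
    (hbounds : ∀ x ∈ Icc σ_ℓ σ_p, 0 ≤ u x ∧ u x ≤ x ∧ 0 ≤ ρ x)
    (hup : 0 < u σ_p) (hρp : 0 < ρ σ_p)
    (hLax : 0 < u σ_p + c σ_p - σ_p) :
    ∀ x ∈ Icc σ_ℓ σ_p,
      (u x + c x - x ≥ u σ_p + c σ_p - σ_p ∧ 0 < u σ_p + c σ_p - σ_p) ∧
      (u x - x) ^ 2 - c x ^ 2 < 0 := by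
  set h : ℝ → ℝ := fun y => u y + c y - y with hh
  have hσpI : σ_p ∈ Icc σ_ℓ σ_p := ⟨hσ.le, le_refl _⟩
  -- P σ_p
  have hPp : (u σ_p - σ_p) ^ 2 - c σ_p ^ 2 < 0 := by
    obtain ⟨hc0, _⟩ := hc σ_p hσpI
    obtain ⟨_, hux, _⟩ := hbounds σ_p hσpI
    nlinarith
  -- continuity
  have hucont : ContinuousOn u (Icc σ_ℓ σ_p) :=
    fun x hx => ((hu' x hx).continuousAt).continuousWithinAt
  have hρcont : ContinuousOn ρ (Icc σ_ℓ σ_p) :=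
    fun x hx => ((hρ' x hx).continuousAt).continuousWithinAt
  have hccont : ContinuousOn c (Icc σ_ℓ σ_p) := by
    have hW : ContinuousOn (fun y => γ * s₁ * ρ y ^ (γ - 1)) (Icc σ_ℓ σ_p) :=
      continuousOn_const.mul (hρcont.rpow_const (fun x _ => Or.inr (by linarith)))
    have : ContinuousOn (fun y => Real.sqrt (γ * s₁ * ρ y ^ (γ - 1))) (Icc σ_ℓ σ_p) :=
      Real.continuous_sqrt.comp_continuousOn hW
    refine this.congr ?_
    intro y hy
    obtain ⟨h1, h2⟩ := hc y hy
    simp only [← h2, Real.sqrt_sq h1]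
  have hhcont : ContinuousOn h (Icc σ_ℓ σ_p) :=
    (hucont.add hccont).sub continuousOn_id
  -- antitone helper
  have hmono : ∀ a ∈ Icc σ_ℓ σ_p,
      (∀ y ∈ Ioo a σ_p, (u y - y) ^ 2 - c y ^ 2 < 0) → AntitoneOn h (Icc a σ_p) := by
    intro a ha hPy
    have hsub : Icc a σ_p ⊆ Icc σ_ℓ σ_p := Icc_subset_Icc_left ha.1
    have hder : ∀ x ∈ interior (Icc a σ_p),
        ∃ d ≤ 0, HasDerivAt h d x := by
      intro x hx
      rw [interior_Icc] at hx
      have hx' : x ∈ Ioo σ_ℓ σ_p := ⟨lt_of_le_of_lt ha.1 hx.1, hx.2⟩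
      exact key_deriv γ s₁ σ_ℓ σ_p ρ u c hγ hσℓ hc hρ' hu' hbounds x hx' (hPy x hx)
    refine antitoneOn_of_deriv_nonpos (convex_Icc a σ_p) (hhcont.mono hsub) ?_ ?_
    · intro x hx
      obtain ⟨d, _, hd⟩ := hder x hx
      exact hd.differentiableAt.differentiableWithinAt
    · intro x hx
      obtain ⟨d, hd0, hd⟩ := hder x hx
      rw [hd.deriv]; exact hd0
  -- P holds everywhere
  have hPall : ∀ x ∈ Icc σ_ℓ σ_p, (u x - x) ^ 2 - c x ^ 2 < 0 := by
    by_contra hcon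
    push_neg at hcon
    obtain ⟨x₀, hx₀I, hx₀⟩ := hcon
    set B := Icc σ_ℓ σ_p ∩ (fun y => (u y - y) ^ 2 - c y ^ 2) ⁻¹' (Ici 0) with hB
    have hfcont : ContinuousOn (fun y => (u y - y) ^ 2 - c y ^ 2) (Icc σ_ℓ σ_p) :=
      (((hucont.sub continuousOn_id).pow 2).sub (hccont.pow 2))
    have hBclosed : IsClosed B := hfcont.preimage_isClosed_of_isClosed isClosed_Icc isClosed_Ici
    have hBne : B.Nonempty := ⟨x₀, hx₀I, hx₀⟩
    have hBcompact : IsCompact B :=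
      isCompact_Icc.of_isClosed_subset hBclosed inter_subset_left
    set t := sSup B with ht
    have htB : t ∈ B := hBcompact.sSup_mem hBne
    have htI : t ∈ Icc σ_ℓ σ_p := htB.1
    have htbad : 0 ≤ (u t - t) ^ 2 - c t ^ 2 := htB.2
    have htlt : t < σ_p := lt_of_le_of_ne htI.2 (by
      intro heq
      rw [heq] at htbad
      linarith)
    have hPy : ∀ y ∈ Ioc t σ_p, (u y - y) ^ 2 - c y ^ 2 < 0 := by
      intro y hy
      have hyI : y ∈ Icc σ_ℓ σ_p := ⟨le_trans htI.1 hy.1.le, hy.2⟩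
      by_contra hny
      push_neg at hny
      have : y ∈ B := ⟨hyI, hny⟩
      have := le_csSup hBcompact.bddAbove this
      exact absurd this (not_le.mpr hy.1)
    -- for each a ∈ Ioc t σ_p, h a ≥ h σ_p
    have hge : ∀ a ∈ Ioc t σ_p, h σ_p ≤ h a := by
      intro a ha
      have haI : a ∈ Icc σ_ℓ σ_p := ⟨le_trans htI.1 ha.1.le, ha.2⟩
      have := hmono a haI (fun y hy => hPy y ⟨lt_trans ha.1 hy.1, hy.2.le⟩)
      exact this (left_mem_Icc.mpr ha.2) ⟨ha.2, le_refl _⟩ ha.2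
    -- limit: h t ≥ h σ_p
    have hne : (nhdsWithin t (Ioc t σ_p)).NeBot := by
      rw [← mem_closure_iff_nhdsWithin_neBot, closure_Ioc (ne_of_lt htlt)]
      exact ⟨le_refl _, htlt.le⟩
    have htend : Filter.Tendsto h (nhdsWithin t (Ioc t σ_p)) (nhds (h t)) := by
      have : Ioc t σ_p ⊆ Icc σ_ℓ σ_p := fun y hy => ⟨le_trans htI.1 hy.1.le, hy.2⟩
      exact ((hhcont t htI).mono this).tendsto
    have hht : h σ_p ≤ h t :=
      ge_of_tendsto htend (Filter.eventually_iff_exists_mem.mpr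
        ⟨Ioc t σ_p, self_mem_nhdsWithin, hge⟩)
    -- h t > 0 gives P t, contradiction
    obtain ⟨hc0t, _⟩ := hc t htI
    obtain ⟨hu0t, huxt, _⟩ := hbounds t htI
    have : (u t - t) ^ 2 - c t ^ 2 < 0 := by
      simp only [hh] at hht
      nlinarith
    linarith
  -- conclude
  intro x hx
  refine ⟨⟨?_, hLax⟩, hPall x hx⟩
  have := hmono σ_ℓ ⟨le_refl _, hσ.le⟩ (fun y hy => hPall y (Ioo_subset_Icc_self hy))
  exact this hx ⟨hσ.le, le_refl _⟩ hx.2
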